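/- For integers n ≥ k ≥ 2, the inequality S(n+1,k−1)·S(n+1,k+1)/S(n+1,k)² − S(n,k−1)·S(n,k)/S(n+1,k)² ≤ (n+2)(n−k+1)/((n+1)(n−k+2)) holds. -/
import Mathlib

/-- Stirling numbers of the second kind. -/
def S : ℕ → ℕ → ℕ
  | 0, 0 => 1
  | 0, _ + 1 => 0
  | _ + 1, 0 => 0
  | n + 1, k + 1 => (k + 1) * S n (k + 1) + S n k

lemma S_zero_of_lt : ∀ n k, n < k → S n k = 0 := by
  intro n
  induction n with
  | zero => intro k hk; match k, hk with | k+1, _ => rfl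
  | succ n ih =>
    intro k hk
    match k, hk with
    | k+1, hk =>
      show (k + 1) * S n (k + 1) + S n k = 0
      rw [ih (k+1) (by omega), ih k (by omega)]
      ring

lemma S_self : ∀ n, S n n = 1 := by
  intro n
  induction n with
  | zero => rfl
  | succ n ih =>
    show (n + 1) * S n (n + 1) + S n n = 1
    rw [S_zero_of_lt n (n+1) (by omega), ih]
    ring

lemma S_pos : ∀ n k, 0 < k → k ≤ n → 0 < S n k := by
  intro n
  induction n with
  | zero => intro k h1 h2; omega
  | succ n ih =>
    intro k h1 h2
    match k, h1 with
    | k+1, _ =>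
      show 0 < (k + 1) * S n (k + 1) + S n k
      rcases Nat.lt_or_ge (k+1) (n+1) with h | h
      · have := ih (k+1) (by omega) (by omega)
        positivity
      · have hk : k = n := by omega
        subst hk
        rw [S_self]
        omega

set_option maxHeartbeats 1000000 in
lemma newton : ∀ m j r, m = j + 1 + r →
    (j+2)*(r+1)*(S m j)*(S m (j+2)) ≤ (j+1)*r*(S m (j+1))^2 := by
  intro m
  induction m with
  | zero => intro j r h; omega
  | succ m ih =>
    intro j r hm
    match j with
    | 0 =>
      show 2*(r+1)*(S (m+1) 0)*(S (m+1) 2) ≤ _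
      have : S (m+1) 0 = 0 := rfl
      rw [this]; simp
    | i+1 =>
      match r with
      | 0 =>
        rw [S_zero_of_lt (m+1) (i+3) (by omega)]
        simp
      | s+1 =>
        have hm' : m = i + s + 2 := by omega
        have H1 := ih i (s+1) (by omega)
        have H2 := ih (i+1) s (by omega)
        have hbp : 0 < S m (i+1) := S_pos m (i+1) (by omega) (by omega)
        have hcp : 0 < S m (i+2) := S_pos m (i+2) (by omega) (by omega)
        have e1 : S (m+1) (i+1) = (i+1)*(S m (i+1)) + S m i := rfl
        have e2 : S (m+1) (i+2) = (i+2)*(S m (i+2)) + S m (i+1) := rfl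
        have e3 : S (m+1) (i+3) = (i+3)*(S m (i+3)) + S m (i+2) := rfl
        show (i+3)*(s+2)*(S (m+1) (i+1))*(S (m+1) (i+3)) ≤ (i+2)*(s+1)*(S (m+1) (i+2))^2
        rw [e1, e2, e3]
        zify at H1 H2 hbp hcp ⊢
        set I := (i:ℤ)
        set T := (s:ℤ)
        set A := (S m i : ℤ) with hA
        set B := (S m (i+1) : ℤ) with hB
        set C := (S m (i+2) : ℤ) with hC
        set D := (S m (i+3) : ℤ) with hD
        have hA0 : 0 ≤ A := by rw [hA]; positivity
        have hD0 : 0 ≤ D := by rw [hD]; positivity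
        have hI0 : 0 ≤ I := Int.ofNat_nonneg i
        have hT0 : 0 ≤ T := Int.ofNat_nonneg s
        have eE1 : 0 ≤ (I+1)*(T+1)*B^2 - (I+2)*(T+2)*A*C := by linarith
        have eE2 : 0 ≤ (I+2)*T*C^2 - (I+3)*(T+1)*B*D := by linarith
        have eE3 : 0 ≤ (I+1)*(T+1)*B^2*((I+2)*T*C^2) - (I+2)*(T+2)*A*C*((I+3)*(T+1)*B*D) := by
          have := mul_le_mul H2 H1 (by positivity) (by positivity)
          nlinarith [this]
        have h1' : 0 ≤ (I+3)*(T+1)*B*C*((I+1)*(T+1)*B^2 - (I+2)*(T+2)*A*C) :=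
          mul_nonneg (by positivity) eE1
        have h2' : 0 ≤ (I+1)*(I+2)*(I+3)*(T+2)*B*C*((I+2)*T*C^2 - (I+3)*(T+1)*B*D) :=
          mul_nonneg (by positivity) eE2
        have h3' : 0 ≤ (I+3)*((I+1)*(T+1)*B^2*((I+2)*T*C^2) - (I+2)*(T+2)*A*C*((I+3)*(T+1)*B*D)) :=
          mul_nonneg (by positivity) eE3
        have hR : 0 ≤ (T+1)^2*B^3*C + 2*(I+2)*(T+1)^2*B^2*C^2 + (I+2)^2*(T+1)^2*B*C^3
            + (I+1)*(I+2)^2*(I+3)*B*C^3 := by positivity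
        have hP : 0 < (I+2)*(T+1)*B*C := by positivity
        have key : (I+2)*(T+1)*B*C * ((I+3)*(T+2)*((I+1)*B+A)*((I+3)*D+C)) ≤
            (I+2)*(T+1)*B*C * ((I+2)*(T+1)*((I+2)*C+B)^2) := by
          linarith [h1', h2', h3', hR]
        have := le_of_mul_le_mul_left key hP
        linarith

theorem stirling2_ratio_key_ineq (n k : ℕ) (h2 : 2 ≤ k) (hkn : k ≤ n) :
    (S (n + 1) (k - 1) : ℚ) * (S (n + 1) (k + 1) : ℚ) / (S (n + 1) k : ℚ) ^ 2 -
        (S n (k - 1) : ℚ) * (S n k : ℚ) / (S (n + 1) k : ℚ) ^ 2 ≤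
      ((n : ℚ) + 2) * ((n : ℚ) - k + 1) / (((n : ℚ) + 1) * ((n : ℚ) - k + 2)) := by
  obtain ⟨j, rfl⟩ : ∃ j, k = j + 2 := ⟨k - 2, by omega⟩
  obtain ⟨r, rfl⟩ : ∃ r, n = j + 2 + r := ⟨n - (j + 2), by omega⟩
  set n := j + 2 + r with hn
  have hsub : j + 2 - 1 = j + 1 := rfl
  rw [hsub]
  have hN := newton (n+1) (j+1) (r+1) (by omega)
  -- cast to ℚ
  have hNq : ((j:ℚ)+3)*((r:ℚ)+2)*(S (n+1) (j+1))*(S (n+1) (j+3)) ≤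
      ((j:ℚ)+2)*((r:ℚ)+1)*(S (n+1) (j+2))^2 := by exact_mod_cast hN
  have hT : (0:ℚ) < (S (n+1) (j+2) : ℚ) := by
    exact_mod_cast S_pos (n+1) (j+2) (by omega) (by omega)
  have hU : (0:ℚ) ≤ (S n (j+1) : ℚ) := by positivity
  have hV : (0:ℚ) ≤ (S n (j+2) : ℚ) := by positivity
  have hX : (0:ℚ) ≤ (S (n+1) (j+1) : ℚ) := by positivity
  have hY : (0:ℚ) ≤ (S (n+1) (j+3) : ℚ) := by positivity
  have step1 : (S (n+1) (j+1) : ℚ) * (S (n+1) (j+3) : ℚ) / (S (n+1) (j+2) : ℚ)^2 -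
      (S n (j+1) : ℚ) * (S n (j+2) : ℚ) / (S (n+1) (j+2) : ℚ)^2 ≤
      (S (n+1) (j+1) : ℚ) * (S (n+1) (j+3) : ℚ) / (S (n+1) (j+2) : ℚ)^2 := by
    have : (0:ℚ) ≤ (S n (j+1) : ℚ) * (S n (j+2) : ℚ) / (S (n+1) (j+2) : ℚ)^2 := by positivity
    linarith
  have step2 : (S (n+1) (j+1) : ℚ) * (S (n+1) (j+3) : ℚ) / (S (n+1) (j+2) : ℚ)^2 ≤
      ((j:ℚ)+2)*((r:ℚ)+1) / (((j:ℚ)+3)*((r:ℚ)+2)) := by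
    rw [div_le_div_iff₀ (by positivity) (by positivity)]
    nlinarith [hNq]
  have step3 : ((j:ℚ)+2)*((r:ℚ)+1) / (((j:ℚ)+3)*((r:ℚ)+2)) ≤
      ((n : ℚ) + 2) * ((n : ℚ) - (j+2:ℕ) + 1) / (((n : ℚ) + 1) * ((n : ℚ) - (j+2:ℕ) + 2)) := by
    have hcast : (n:ℚ) = (j:ℚ) + 2 + (r:ℚ) := by rw [hn]; push_cast; ring
    rw [hcast]
    push_cast
    have e1 : (j:ℚ) + 2 + (r:ℚ) - ((j:ℚ)+2) + 1 = (r:ℚ) + 1 := by ring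
    have e2 : (j:ℚ) + 2 + (r:ℚ) - ((j:ℚ)+2) + 2 = (r:ℚ) + 2 := by ring
    rw [e1, e2]
    rw [div_le_div_iff₀ (by positivity) (by positivity)]
    have hj : (0:ℚ) ≤ (j:ℚ) := by positivity
    have hr : (0:ℚ) ≤ (r:ℚ) := by positivity
    nlinarith [mul_nonneg (mul_nonneg (by linarith : (0:ℚ) ≤ (r:ℚ)+1) (by linarith : (0:ℚ) ≤ (r:ℚ)+2)) (by linarith : (0:ℚ) ≤ 2*(j:ℚ)+(r:ℚ)+6)]
  calc _ ≤ (S (n+1) (j+1) : ℚ) * (S (n+1) (j+3) : ℚ) / (S (n+1) (j+2) : ℚ)^2 := step1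
    _ ≤ ((j:ℚ)+2)*((r:ℚ)+1) / (((j:ℚ)+3)*((r:ℚ)+2)) := step2
    _ ≤ _ := step3
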